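/- arXiv:2210.04418 — 5 statements merged into one kernel-verified Lean document; each statement's English description precedes it below -/
import Mathlib

section
/- Let X be a compact convex subset of ℝⁿ, V̂, V, D continuous real-valued functionals where D assigns a cost to each probability measure on X. Suppose Φ* maximizes Φ ↦ ∫V dΦ - D(Φ) over probability measures with barycenter μ₀, and Φ̂* maximizes Φ ↦ ∫V̂ dΦ - D(Φ) over the same set, with Φ̂* strictly better than Φ* for the V̂-problem (strict inequality of objectives). Then it is not the case that ∫(V̂-V) dΦ̂* ≤ ∫(V̂-V) dΦ*; in particular if V̂ - V is convex, Φ̂* cannot be a strict mean-preserving contraction of Φ*. -/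
open MeasureTheory

lemma integ_aux {n : ℕ} {X : Set (Fin n → ℝ)} (hXcomp : IsCompact X)
    {V : (Fin n → ℝ) → ℝ} (hV : ContinuousOn V X)
    (Φ : Measure (Fin n → ℝ)) [IsProbabilityMeasure Φ] (hΦ : Φ X = 1) :
    Integrable V Φ := by
  have hXm : MeasurableSet X := hXcomp.isClosed.measurableSet
  have hc : Φ Xᶜ = 0 := by
    have := measure_compl hXm (measure_ne_top Φ X)
    simp [hΦ] at this; simpa using this
  have hae : ∀ᵐ x ∂Φ, x ∈ X := by
    rw [ae_iff]; exact hc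
  have hres : Φ.restrict X = Φ := Measure.restrict_eq_self_of_ae_mem hae
  obtain ⟨C, hC⟩ := hXcomp.exists_bound_of_continuousOn hV
  refine ⟨?_, ?_⟩
  · have := (hV.aemeasurable (μ := Φ) hXm).aestronglyMeasurable
    rwa [hres] at this
  · exact HasFiniteIntegral.of_bounded (C := C) (hae.mono fun x hx => hC x hx)

/-- If `Φ*` maximizes `∫V dΦ - D Φ` over probability measures on `X`
with barycenter `μ₀`, `Φ̂*` maximizes `∫V̂ dΦ - D Φ`, and `Φ̂*` is strictly better
than `Φ*` for the `V̂`-problem, then `∫(V̂-V) dΦ̂* ≤ ∫(V̂-V) dΦ*` fails (so, when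
`V̂ - V` is convex, `Φ̂*` cannot be a strict mean-preserving contraction of `Φ*`). -/
theorem stmt1 {n : ℕ} (X : Set (Fin n → ℝ)) (hXcomp : IsCompact X) (hXconv : Convex ℝ X)
    (Vhat V : (Fin n → ℝ) → ℝ)
    (hVhat : ContinuousOn Vhat X) (hV : ContinuousOn V X)
    (D : Measure (Fin n → ℝ) → ℝ) (μ₀ : Fin n → ℝ)
    (Φstar Φhatstar : Measure (Fin n → ℝ))
    [IsProbabilityMeasure Φstar] [IsProbabilityMeasure Φhatstar]
    (hΦ : Φstar X = 1) (hΦbary : ∫ x, x ∂Φstar = μ₀)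
    (hΦh : Φhatstar X = 1) (hΦhbary : ∫ x, x ∂Φhatstar = μ₀)
    (hmax : ∀ Ψ : Measure (Fin n → ℝ), IsProbabilityMeasure Ψ → Ψ X = 1 →
      (∫ x, x ∂Ψ = μ₀) → (∫ x, V x ∂Ψ) - D Ψ ≤ (∫ x, V x ∂Φstar) - D Φstar)
    (hmaxhat : ∀ Ψ : Measure (Fin n → ℝ), IsProbabilityMeasure Ψ → Ψ X = 1 →
      (∫ x, x ∂Ψ = μ₀) → (∫ x, Vhat x ∂Ψ) - D Ψ ≤ (∫ x, Vhat x ∂Φhatstar) - D Φhatstar)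
    (hstrict : (∫ x, Vhat x ∂Φstar) - D Φstar < (∫ x, Vhat x ∂Φhatstar) - D Φhatstar) :
    ¬ ((∫ x, (Vhat x - V x) ∂Φhatstar) ≤ ∫ x, (Vhat x - V x) ∂Φstar) := by
  intro hle
  have hIVh1 : Integrable Vhat Φhatstar := integ_aux hXcomp hVhat _ hΦh
  have hIV1 : Integrable V Φhatstar := integ_aux hXcomp hV _ hΦh
  have hIVh2 : Integrable Vhat Φstar := integ_aux hXcomp hVhat _ hΦ
  have hIV2 : Integrable V Φstar := integ_aux hXcomp hV _ hΦ
  rw [integral_sub hIVh1 hIV1, integral_sub hIVh2 hIV2] at hle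
  have h1 := hmax Φhatstar inferInstance hΦh hΦhbary
  linarith
end

section
/- Let Δ be the simplex over a finite state space, A a finite action set with value function V, and Â ⊊ A a nonempty subset with value function V̂ ≤ V. Suppose there exists a_i ∈ Â and μ' with 𝔼_{μ'} u(a_i,·) > max_{a∈A∖{a_i}} 𝔼_{μ'} u(a,·) (a leftover), and there exists a_j ∈ A∖Â and μ with 𝔼_μ u(a_j,·) > max_{a∈A∖{a_j}} 𝔼_μ u(a,·) (the removal is consequential). Then V̂ - V is not convex. -/
/-- removing actions from a finite decision problem, if some remaining
action is undominated in the original problem (a leftover) and some removed action is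
undominated (the removal is consequential), then `V̂ - V` is not convex. -/
theorem stmt8 {Θ : Type*} [Fintype Θ] {A : Type*} [Fintype A] [Nonempty A]
    (u : A → Θ → ℝ) (Ahat : Finset A) (hne : Ahat.Nonempty) (hprop : Ahat ⊂ Finset.univ)
    (V Vh : (Θ → ℝ) → ℝ)
    (hV : ∀ μ, V μ = ⨆ a, ∑ θ, μ θ * u a θ)
    (hVh : ∀ μ, Vh μ = Ahat.sup' hne (fun a => ∑ θ, μ θ * u a θ))
    (hVhleV : ∀ μ ∈ stdSimplex ℝ Θ, Vh μ ≤ V μ)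
    (hleftover : ∃ ai ∈ Ahat, ∃ μ' ∈ stdSimplex ℝ Θ,
      ∀ a ≠ ai, ∑ θ, μ' θ * u a θ < ∑ θ, μ' θ * u ai θ)
    (hconseq : ∃ aj ∉ Ahat, ∃ μ ∈ stdSimplex ℝ Θ,
      ∀ a ≠ aj, ∑ θ, μ θ * u a θ < ∑ θ, μ θ * u aj θ) :
    ¬ ConvexOn ℝ (stdSimplex ℝ Θ) (fun μ => Vh μ - V μ) := by
  classical
  intro hconv
  obtain ⟨ai, hai, μ', hμ', hstrict'⟩ := hleftover
  obtain ⟨aj, haj, μ, hμ, hstrict⟩ := hconseq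
  have hajne : aj ≠ ai := fun h => haj (h ▸ hai)
  -- expectation as function
  set E : A → (Θ → ℝ) → ℝ := fun a ν => ∑ θ, ν θ * u a θ with hE
  -- f μ < 0
  have hVμ : E aj μ ≤ V μ := by
    rw [hV]
    exact le_ciSup (Finite.bddAbove_range fun a => ∑ θ, μ θ * u a θ) aj
  have hflt : Vh μ - V μ < 0 := by
    have h1 : Vh μ < E aj μ := by
      rw [hVh]
      rw [Finset.sup'_lt_iff]
      intro a ha
      exact hstrict a (fun h => haj (h ▸ ha))
    linarith
  have hfle : Vh μ' - V μ' ≤ 0 := sub_nonpos.mpr (hVhleV μ' hμ')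
  -- the quantities
  set s : Finset A := Finset.univ.erase ai with hs
  have hsne : s.Nonempty := ⟨aj, Finset.mem_erase.mpr ⟨hajne, Finset.mem_univ _⟩⟩
  set c : ℝ := s.inf' hsne (fun a => E ai μ' - E a μ') with hc
  have hcpos : 0 < c := by
    rw [hc, Finset.lt_inf'_iff]
    intro a ha
    have := hstrict' a (Finset.mem_erase.mp ha).1
    simpa [hE] using sub_pos.mpr this
  set D : ℝ := s.sup' hsne (fun a => |E a μ - E ai μ|) with hD
  obtain ⟨a0, ha0⟩ := hsne
  have hDnn : 0 ≤ D := le_trans (abs_nonneg (E a0 μ - E ai μ)) (Finset.le_sup' (fun a => |E a μ - E ai μ|) ha0)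
  set l : ℝ := min (1/2) (c / (4 * (D + 1))) with hl
  have hlpos : 0 < l := lt_min (by norm_num) (by positivity)
  have hl2 : l ≤ 1/2 := min_le_left _ _
  have hl4 : l * (4 * (D + 1)) ≤ c := by
    have := min_le_right (1/2) (c / (4 * (D + 1)))
    rw [← hl] at this
    calc l * (4 * (D + 1)) ≤ (c / (4 * (D + 1))) * (4 * (D + 1)) := by
          apply mul_le_mul_of_nonneg_right this; positivity
      _ = c := by field_simp
  -- the midpoint
  set μ₀ : Θ → ℝ := l • μ + (1 - l) • μ' with hμ₀
  have hmem : μ₀ ∈ stdSimplex ℝ Θ :=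
    (convex_stdSimplex ℝ Θ) hμ hμ' (le_of_lt hlpos) (by linarith) (by ring)
  have hEcomb : ∀ a, E a μ₀ = l * E a μ + (1 - l) * E a μ' := by
    intro a
    simp only [hE, hμ₀, Pi.add_apply, Pi.smul_apply, smul_eq_mul]
    rw [Finset.mul_sum, Finset.mul_sum, ← Finset.sum_add_distrib]
    exact Finset.sum_congr rfl fun θ _ => by ring
  -- at μ₀, ai is optimal among all actions
  have hopt : ∀ a, E a μ₀ ≤ E ai μ₀ := by
    intro a
    rcases eq_or_ne a ai with rfl | hne'
    · exact le_refl _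
    · have hmem' : a ∈ s := Finset.mem_erase.mpr ⟨hne', Finset.mem_univ _⟩
      have h1 : c ≤ E ai μ' - E a μ' := Finset.inf'_le _ hmem'
      have h2 : |E a μ - E ai μ| ≤ D := Finset.le_sup' (fun a => |E a μ - E ai μ|) hmem'
      have h3 : E a μ - E ai μ ≤ |E a μ - E ai μ| := le_abs_self _
      rw [hEcomb a, hEcomb ai]
      nlinarith [mul_le_mul_of_nonneg_left h1 (by linarith : (0:ℝ) ≤ 1 - l),
        mul_le_mul_of_nonneg_left (le_trans h3 h2) (le_of_lt hlpos)]
  have hVμ₀ : V μ₀ ≤ E ai μ₀ := by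
    rw [hV]; exact ciSup_le hopt
  have hVhμ₀ : E ai μ₀ ≤ Vh μ₀ := by
    rw [hVh]; exact Finset.le_sup' (fun a => ∑ θ, μ₀ θ * u a θ) hai
  have hzero : Vh μ₀ - V μ₀ = 0 := by
    have := hVhleV μ₀ hmem
    linarith
  have := hconv.2 hμ hμ' (le_of_lt hlpos) (by linarith : (0:ℝ) ≤ 1 - l) (by ring)
  simp only [← hμ₀] at this
  rw [hzero] at this
  simp only [smul_eq_mul] at this
  nlinarith [mul_lt_mul_of_pos_left hflt hlpos, mul_le_mul_of_nonneg_left hfle (by linarith : (0:ℝ) ≤ 1 - l)]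
end

section
/- Let Δ be the simplex over a finite state space, μ₀ in the interior of Δ, and V̂, V : Δ → ℝ continuous. Suppose that for every probability measure F on Δ with barycenter μ₀, ∫(V̂ - V) dF ≥ V̂(μ₀) - V(μ₀). Then there exists an affine function ℓ such that V̂(μ₀) + ℓ(μ₀) = V(μ₀) and V̂(μ) + ℓ(μ) ≥ V(μ) for all μ ∈ Δ. -/
open MeasureTheory

/-- Integral of a function against a finite convex combination of Dirac measures. -/
lemma discrete_integral {Θ : Type*} [Fintype Θ] {ι : Type} (t : Finset ι)
    (w : ι → ℝ) (z : ι → Θ → ℝ) (hw0 : ∀ i ∈ t, 0 ≤ w i)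
    {E : Type*} [NormedAddCommGroup E] [NormedSpace ℝ E] [CompleteSpace E]
    (f : (Θ → ℝ) → E) :
    ∫ x, f x ∂(∑ i ∈ t, ENNReal.ofReal (w i) • Measure.dirac (z i))
      = ∑ i ∈ t, w i • f (z i) := by
  rw [integral_finset_sum_measure (fun i hi =>
    ((integrable_const (f (z i))).congr (ae_eq_dirac f).symm).smul_measure
      ENNReal.ofReal_ne_top)]
  refine Finset.sum_congr rfl fun i hi => ?_
  rw [integral_smul_measure, integral_dirac, ENNReal.toReal_ofReal (hw0 i hi)]

/-- From the measure-theoretic hypothesis we get the finite-combination inequality. -/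
lemma combo_ineq {Θ : Type*} [Fintype Θ] (Vhat V : (Θ → ℝ) → ℝ) (μ₀ : Θ → ℝ)
    (h : ∀ F : Measure (Θ → ℝ), IsProbabilityMeasure F →
      F (stdSimplex ℝ Θ) = 1 → (∫ x, x ∂F = μ₀) →
      Vhat μ₀ - V μ₀ ≤ ∫ x, (Vhat x - V x) ∂F)
    {ι : Type} (t : Finset ι) (w : ι → ℝ) (z : ι → Θ → ℝ)
    (hw0 : ∀ i ∈ t, 0 ≤ w i) (hw1 : ∑ i ∈ t, w i = 1)
    (hz : ∀ i ∈ t, z i ∈ stdSimplex ℝ Θ)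
    (hbar : (∑ i ∈ t, w i • z i) = μ₀) :
    Vhat μ₀ - V μ₀ ≤ ∑ i ∈ t, w i * (Vhat (z i) - V (z i)) := by
  set F : Measure (Θ → ℝ) := ∑ i ∈ t, ENNReal.ofReal (w i) • Measure.dirac (z i) with hF
  have hsum : ∀ s : Set (Θ → ℝ), F s = ∑ i ∈ t, ENNReal.ofReal (w i) * Measure.dirac (z i) s := by
    intro s
    rw [hF, Measure.finset_sum_apply]
    refine Finset.sum_congr rfl fun i hi => ?_
    simp [Measure.smul_apply]
  have huniv : F Set.univ = 1 := by
    rw [hsum]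
    simp only [measure_univ, mul_one]
    rw [← ENNReal.ofReal_sum_of_nonneg hw0, hw1, ENNReal.ofReal_one]
  have hprob : IsProbabilityMeasure F := ⟨huniv⟩
  have hΔ : F (stdSimplex ℝ Θ) = 1 := by
    rw [hsum]
    have : ∀ i ∈ t, Measure.dirac (z i) (stdSimplex ℝ Θ) = 1 := fun i hi =>
      Measure.dirac_apply_of_mem (hz i hi)
    rw [Finset.sum_congr rfl fun i hi => by rw [this i hi, mul_one]]
    rw [← ENNReal.ofReal_sum_of_nonneg hw0, hw1, ENNReal.ofReal_one]
  have hbary : ∫ x, x ∂F = μ₀ := by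
    rw [hF, discrete_integral t w z hw0 (fun x => x), hbar]
  have := h F hprob hΔ hbary
  rwa [hF, discrete_integral t w z hw0 (fun x => Vhat x - V x)] at this
  
/-- Moving slightly past an intrinsic-interior point away from any point of the set stays
in the set. -/
lemma intrinsic_step {E : Type*} [NormedAddCommGroup E] [NormedSpace ℝ E]
    {s : Set E} {μ₀ x : E} (hμ₀ : μ₀ ∈ intrinsicInterior ℝ s) (hx : x ∈ s) :
    ∃ ε : ℝ, 0 < ε ∧ μ₀ + ε • (μ₀ - x) ∈ s := by
  obtain ⟨z, hz, hzcoe⟩ := hμ₀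
  have hxA : x ∈ affineSpan ℝ s := subset_affineSpan ℝ s hx
  have hμA : μ₀ ∈ affineSpan ℝ s := hzcoe ▸ z.2
  let φ : ℝ → (affineSpan ℝ s : Set E) := fun c =>
    ⟨c • (μ₀ - x) + μ₀, by
      have := (affineSpan ℝ s).smul_vsub_vadd_mem c hμA hxA hμA
      simpa [vsub_eq_sub, vadd_eq_add] using this⟩
  have hφcoe : ∀ c, ((φ c : (affineSpan ℝ s : Set E)) : E) = c • (μ₀ - x) + μ₀ :=
    fun c => rfl
  have hφcont : Continuous φ := by
    apply continuous_induced_rng.2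
    exact (continuous_id.smul continuous_const).add continuous_const
  have hφ0 : φ 0 = z := by
    apply Subtype.ext
    rw [hφcoe]
    simp [hzcoe]
  have hnhds : φ ⁻¹' (interior ((Subtype.val : (affineSpan ℝ s : Set E) → E) ⁻¹' s))
      ∈ nhds (0 : ℝ) := by
    apply hφcont.continuousAt.preimage_mem_nhds
    rw [hφ0]
    exact isOpen_interior.mem_nhds hz
  obtain ⟨ε, hε, hball⟩ := Metric.mem_nhds_iff.1 hnhds
  refine ⟨ε / 2, by positivity, ?_⟩
  have hmem : φ (ε / 2) ∈ (Subtype.val : (affineSpan ℝ s : Set E) → E) ⁻¹' s := by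
    apply interior_subset
    apply hball
    simp only [Metric.mem_ball, Real.dist_eq, sub_zero]
    rw [abs_of_pos (by positivity)]
    linarith
  have h2 : ((φ (ε / 2) : (affineSpan ℝ s : Set E)) : E) ∈ s := hmem
  rwa [hφcoe, add_comm] at h2

/-- shift-majorization, necessity: if for every probability measure `F`
on the simplex with barycenter `μ₀` (interior) one has `∫(V̂-V) dF ≥ V̂(μ₀) - V(μ₀)`,
then there is an affine `ℓ` with `V̂(μ₀) + ℓ(μ₀) = V(μ₀)` and `V̂ + ℓ ≥ V` on the simplex. -/
theorem stmt11 {Θ : Type*} [Fintype Θ] (Vhat V : (Θ → ℝ) → ℝ)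
    (hVhat : ContinuousOn Vhat (stdSimplex ℝ Θ)) (hV : ContinuousOn V (stdSimplex ℝ Θ))
    (μ₀ : Θ → ℝ) (hμ₀ : μ₀ ∈ intrinsicInterior ℝ (stdSimplex ℝ Θ))
    (h : ∀ F : Measure (Θ → ℝ), IsProbabilityMeasure F →
      F (stdSimplex ℝ Θ) = 1 → (∫ x, x ∂F = μ₀) →
      Vhat μ₀ - V μ₀ ≤ ∫ x, (Vhat x - V x) ∂F) :
    ∃ (l : Θ → ℝ) (τ : ℝ),
      Vhat μ₀ + ((∑ θ, l θ * μ₀ θ) + τ) = V μ₀ ∧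
      ∀ μ ∈ stdSimplex ℝ Θ, V μ ≤ Vhat μ + ((∑ θ, l θ * μ θ) + τ) := by
  classical
  set Δ := stdSimplex ℝ Θ with hΔdef
  have hμΔ : μ₀ ∈ Δ := intrinsicInterior_subset hμ₀
  set W : (Θ → ℝ) → ℝ := fun x => Vhat x - V x with hWdef
  have hWc : ContinuousOn W Δ := hVhat.sub hV
  -- Θ is nonempty
  have hΘ : Nonempty Θ := by
    by_contra hempty
    have : IsEmpty Θ := not_nonempty_iff.mp hempty
    have h1 : (∑ θ : Θ, μ₀ θ) = 1 := hμΔ.2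
    simp [Finset.univ_eq_empty] at h1
  set n : ℝ := (Fintype.card Θ : ℝ) with hndef
  have hn : 0 < n := by
    simp only [hndef]
    exact_mod_cast Fintype.card_pos (α := Θ)
  set ones : Θ → ℝ := fun _ => 1 with hones
  have hsum_ones : (∑ _θ : Θ, (1:ℝ)) = n := by simp [hndef]
  -- maximum of W on Δ
  obtain ⟨xm, hxmΔ, hxm'⟩ := (isCompact_stdSimplex ℝ Θ).exists_isMaxOn ⟨μ₀, hμΔ⟩ hWc
  have hxm : ∀ y ∈ Δ, W y ≤ W xm := fun y hy => hxm' hy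
  set T : ℝ := W xm with hTdef
  -- the fattened epigraph
  set E' : Set ((Θ → ℝ) × ℝ) :=
    {p | ∃ x ∈ Δ, ∃ c : ℝ, p.1 = x + c • ones ∧ W x ≤ p.2} with hE'def
  set K : Set ((Θ → ℝ) × ℝ) := convexHull ℝ E' with hKdef
  -- key consequence of the hypothesis: no point strictly below (μ₀, W μ₀) is in K
  have hkey : ∀ δ : ℝ, 0 < δ → ((μ₀, W μ₀ - δ) : (Θ → ℝ) × ℝ) ∉ K := by
    intro δ hδ hmem
    rw [hKdef, convexHull_eq] at hmem
    obtain ⟨ι, t, w, z, hw0, hw1, hzE, hcm⟩ := hmem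
    rw [Finset.centerMass_eq_of_sum_1 _ _ hw1] at hcm
    have hchoice := fun i (hi : i ∈ t) => hzE i hi
    choose! x hxΔ c hc1 hc2 using hchoice
    -- first components
    have hfst : (∑ i ∈ t, w i • (x i + c i • ones)) = μ₀ := by
      have : (∑ i ∈ t, w i • z i).1 = μ₀ := by rw [hcm]
      rw [Prod.fst_sum] at this
      rw [← this]
      exact Finset.sum_congr rfl fun i hi => by rw [Prod.smul_fst, hc1 i hi]
    -- second components
    have hsnd : (∑ i ∈ t, w i * (z i).2) = W μ₀ - δ := by
      have : (∑ i ∈ t, w i • z i).2 = W μ₀ - δ := by rw [hcm]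
      rw [Prod.snd_sum] at this
      rw [← this]
      exact Finset.sum_congr rfl fun i hi => by rw [Prod.smul_snd, smul_eq_mul]
    -- sum the coordinates of the first components
    have hcsum : (∑ i ∈ t, w i * c i) = 0 := by
      have h1 : (∑ θ, μ₀ θ) = 1 := hμΔ.2
      have h2 : (∑ θ, (∑ i ∈ t, w i • (x i + c i • ones)) θ)
          = ∑ i ∈ t, w i * (1 + c i * n) := by
        simp only [Finset.sum_apply, Pi.smul_apply, Pi.add_apply, smul_eq_mul]
        rw [Finset.sum_comm]
        refine Finset.sum_congr rfl fun i hi => ?_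
        have hx1 : (∑ θ, x i θ) = 1 := (hxΔ i hi).2
        rw [← Finset.mul_sum]
        congr 1
        rw [Finset.sum_add_distrib, hx1]
        congr 1
        simp only [hones]
        rw [Finset.sum_const, Finset.card_univ, nsmul_eq_mul]
        simp only [hndef]
        ring
      rw [hfst, h1] at h2
      have h3 : (∑ i ∈ t, w i * (1 + c i * n)) = 1 + (∑ i ∈ t, w i * c i) * n := by
        rw [Finset.sum_congr rfl (fun i _ => by ring_nf :
          ∀ i ∈ t, w i * (1 + c i * n) = w i + w i * c i * n)]
        rw [Finset.sum_add_distrib, hw1, ← Finset.sum_mul]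
      rw [h3] at h2
      have : (∑ i ∈ t, w i * c i) * n = 0 := by linarith
      rcases mul_eq_zero.1 this with h | h
      · exact h
      · exact absurd h (ne_of_gt hn)
    -- barycenter of the x i is μ₀
    have hbar : (∑ i ∈ t, w i • x i) = μ₀ := by
      have : (∑ i ∈ t, w i • (x i + c i • ones))
          = (∑ i ∈ t, w i • x i) + (∑ i ∈ t, w i * c i) • ones := by
        rw [Finset.sum_smul]
        rw [← Finset.sum_add_distrib]
        refine Finset.sum_congr rfl fun i hi => ?_
        rw [smul_add, smul_smul]
      rw [this, hcsum, zero_smul, add_zero] at hfst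
      exact hfst
    have hineq := combo_ineq Vhat V μ₀ h t w x hw0 hw1 hxΔ hbar
    have hle : (∑ i ∈ t, w i * (Vhat (x i) - V (x i))) ≤ ∑ i ∈ t, w i * (z i).2 :=
      Finset.sum_le_sum fun i hi => mul_le_mul_of_nonneg_left (hc2 i hi) (hw0 i hi)
    rw [hsnd] at hle
    have : W μ₀ ≤ W μ₀ - δ := le_trans hineq hle
    linarith
  have hμ₀E' : ∀ s : ℝ, W μ₀ ≤ s → ∀ c : ℝ, ((μ₀ + c • ones, s) : (Θ → ℝ) × ℝ) ∈ E' :=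
    fun s hs c => ⟨μ₀, hμΔ, c, rfl, hs⟩
  -- the open set inside E'
  set G : Set ((Θ → ℝ) × ℝ) :=
    {p | (∀ θ, ((∑ θ', p.1 θ') - 1) / n < p.1 θ) ∧ T < p.2} with hGdef
  have hGopen : IsOpen G := by
    have hc1 : Continuous fun p : (Θ → ℝ) × ℝ => ((∑ θ', p.1 θ') - 1) / n := by
      apply Continuous.div_const
      exact (continuous_finset_sum _ fun θ' _ => (continuous_apply θ').comp continuous_fst).sub
        continuous_const
    have h1 : IsOpen {p : (Θ → ℝ) × ℝ | ∀ θ, ((∑ θ', p.1 θ') - 1) / n < p.1 θ} := by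
      rw [Set.setOf_forall]
      exact isOpen_iInter_of_finite fun θ =>
        isOpen_lt hc1 ((continuous_apply θ).comp continuous_fst)
    exact h1.inter (isOpen_lt continuous_const continuous_snd)
  have hGE' : G ⊆ E' := by
    rintro ⟨y, s⟩ ⟨h1, h2⟩
    refine ⟨y - (((∑ θ', y θ') - 1) / n) • ones, ⟨?_, ?_⟩, ((∑ θ', y θ') - 1) / n, ?_, ?_⟩
    · intro θ
      have := h1 θ
      simp only [Pi.sub_apply, Pi.smul_apply, hones, smul_eq_mul, mul_one]
      linarith
    · simp only [Pi.sub_apply, Pi.smul_apply, hones, smul_eq_mul, mul_one]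
      rw [Finset.sum_sub_distrib, Finset.sum_const, nsmul_eq_mul]
      have : ((Finset.univ : Finset Θ).card : ℝ) = n := by simp [hndef]
      rw [this]
      field_simp
      ring
    · simp
    · have hyΔ : y - (((∑ θ', y θ') - 1) / n) • ones ∈ Δ := by
        constructor
        · intro θ
          have := h1 θ
          simp only [Pi.sub_apply, Pi.smul_apply, hones, smul_eq_mul, mul_one]
          linarith
        · simp only [Pi.sub_apply, Pi.smul_apply, hones, smul_eq_mul, mul_one]
          rw [Finset.sum_sub_distrib, Finset.sum_const, nsmul_eq_mul]
          have : ((Finset.univ : Finset Θ).card : ℝ) = n := by simp [hndef]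
          rw [this]
          field_simp
          ring
      exact le_trans (hxm _ hyΔ) h2.le
  have hGne : G.Nonempty := by
    refine ⟨((fun _ => n⁻¹ : Θ → ℝ), T + 1), ?_, by simp⟩
    intro θ
    have : (∑ _θ' : Θ, (n⁻¹ : ℝ)) = 1 := by
      rw [Finset.sum_const, nsmul_eq_mul]
      have : ((Finset.univ : Finset Θ).card : ℝ) = n := by simp [hndef]
      rw [this]
      field_simp
    rw [this]
    simp only [sub_self, zero_div]
    positivity
  have hGK : G ⊆ K := hGE'.trans (subset_convexHull ℝ E')
  have hSne : (interior K).Nonempty := hGne.mono (interior_maximal hGK hGopen)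
  -- the touching point is not in the interior of K
  have hp₀ : ((μ₀, W μ₀) : (Θ → ℝ) × ℝ) ∉ interior K := by
    intro hmem
    obtain ⟨ε, hε, hball⟩ := Metric.isOpen_iff.1 isOpen_interior _ hmem
    have : ((μ₀, W μ₀ - ε/2) : (Θ → ℝ) × ℝ) ∈ K := by
      apply interior_subset
      apply hball
      rw [Metric.mem_ball, Prod.dist_eq]
      simp only [dist_self, Real.dist_eq]
      rw [max_lt_iff]
      constructor
      · exact hε
      · rw [abs_of_neg (by linarith : W μ₀ - ε/2 - W μ₀ < 0)]
        linarith
    exact hkey (ε/2) (by positivity) this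
  -- separation
  obtain ⟨f, hf⟩ := geometric_hahn_banach_open_point
    ((convex_convexHull ℝ E').interior) isOpen_interior hp₀
  -- extend the inequality from the interior to all of K by a limit argument
  have hfK : ∀ a ∈ K, f a ≤ f (μ₀, W μ₀) := by
    intro a ha
    obtain ⟨b, hb⟩ := hSne
    have hseq : ∀ m : ℕ, f ((1 - 1/(m+1) : ℝ) • a + (1/(m+1) : ℝ) • b) < f (μ₀, W μ₀) := by
      intro m
      have hm1 : (0:ℝ) < 1/(m+1) := by positivity
      have hm2 : (1:ℝ)/(m+1) ≤ 1 := by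
        rw [div_le_one (by positivity)]
        have : (0:ℝ) ≤ m := Nat.cast_nonneg m
        linarith
      exact hf _ ((convex_convexHull ℝ E').combo_closure_interior_mem_interior
        (x := a) (y := b) (a := 1 - 1/(m+1)) (b := 1/(m+1))
        (subset_closure ha) hb (by linarith) hm1 (by ring))
    have hlim : Filter.Tendsto (fun m : ℕ => (1 - 1/(m+1) : ℝ) • a + (1/(m+1) : ℝ) • b)
        Filter.atTop (nhds a) := by
      have h0 : Filter.Tendsto (fun m : ℕ => (1:ℝ)/(m+1)) Filter.atTop (nhds 0) :=
        tendsto_one_div_add_atTop_nhds_zero_nat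
      have h1 : Filter.Tendsto (fun m : ℕ => (1 - 1/(m+1) : ℝ)) Filter.atTop (nhds (1 - 0)) :=
        Filter.Tendsto.const_sub (1:ℝ) h0
      have := (h1.smul_const a).add (h0.smul_const b)
      simpa using this
    exact le_of_tendsto ((f.continuous.tendsto a).comp hlim)
      (Filter.Eventually.of_forall fun m => (hseq m).le)
  set β : ℝ := f (0, 1) with hβdef
  set g : (Θ → ℝ) → ℝ := fun x => f (x, 0) with hgdef
  have hsplit : ∀ (x : Θ → ℝ) (s : ℝ), f (x, s) = g x + s * β := by
    intro x s
    have : ((x, s) : (Θ → ℝ) × ℝ) = (x, 0) + s • ((0 : Θ → ℝ), (1:ℝ)) := by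
      ext <;> simp
    rw [this, map_add, _root_.map_smul]
    simp [hgdef, hβdef, smul_eq_mul]
  have hgadd : ∀ x y : Θ → ℝ, g (x + y) = g x + g y := by
    intro x y
    have : ((x + y, (0:ℝ)) : (Θ → ℝ) × ℝ) = (x, 0) + (y, 0) := by ext <;> simp
    simp only [hgdef]
    rw [this, map_add]
  have hgsmul : ∀ (c : ℝ) (x : Θ → ℝ), g (c • x) = c * g x := by
    intro c x
    have : ((c • x, (0:ℝ)) : (Θ → ℝ) × ℝ) = c • (x, 0) := by ext <;> simp
    simp only [hgdef]
    rw [this, _root_.map_smul, smul_eq_mul]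
  -- the fundamental inequality on E'
  have hEf : ∀ x ∈ Δ, ∀ c s : ℝ, W x ≤ s →
      g x + c * g ones + s * β ≤ g μ₀ + W μ₀ * β := by
    intro x hx c s hs
    have hmem : ((x + c • ones, s) : (Θ → ℝ) × ℝ) ∈ K :=
      subset_convexHull ℝ E' ⟨x, hx, c, rfl, hs⟩
    have := hfK _ hmem
    rw [hsplit, hsplit, hgadd, hgsmul] at this
    linarith
  -- β ≤ 0
  have hβle : β ≤ 0 := by
    have h1 := hEf μ₀ hμΔ 0 (W μ₀) le_rfl
    have h2 := hEf μ₀ hμΔ 0 (W μ₀ + 1) (by linarith)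
    simp only [zero_mul] at h1 h2
    nlinarith
  -- β ≠ 0
  have hβne : β ≠ 0 := by
    intro hβ0
    have hones0 : g ones = 0 := by
      have h1 := hEf μ₀ hμΔ 1 (W μ₀) le_rfl
      have h2 := hEf μ₀ hμΔ (-1) (W μ₀) le_rfl
      rw [hβ0] at h1 h2
      simp only [mul_zero] at h1 h2
      linarith
    have hgΔ : ∀ x ∈ Δ, g x ≤ g μ₀ := by
      intro x hx
      have := hEf x hx 0 (W x) le_rfl
      rw [hβ0] at this
      simp only [mul_zero, zero_mul] at this
      linarith
    have hgconst : ∀ x ∈ Δ, g x = g μ₀ := by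
      intro x hx
      refine le_antisymm (hgΔ x hx) ?_
      obtain ⟨ε, hε, hmem⟩ := intrinsic_step hμ₀ hx
      have := hgΔ _ hmem
      have heq : g (μ₀ + ε • (μ₀ - x)) = g μ₀ + ε * (g μ₀ - g x) := by
        rw [hgadd, hgsmul]
        congr 2
        have : μ₀ - x = μ₀ + (-1 : ℝ) • x := by ext θ; simp; ring
        rw [this, hgadd, hgsmul]
        ring
      rw [heq] at this
      nlinarith
    have hfconst : ∀ p ∈ E', f p = f (μ₀, W μ₀) := by
      rintro ⟨y, s⟩ ⟨x, hx, c, hy, hs⟩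
      simp only at hy
      rw [hy, hsplit, hsplit, hgadd, hgsmul, hones0, hgconst x hx, hβ0]
      ring
    have hKconst : K ⊆ {p | f p = f (μ₀, W μ₀)} := by
      rw [hKdef]
      apply convexHull_min hfconst
      intro p hp q hq a b ha hb hab
      have hp' : f p = f (μ₀, W μ₀) := hp
      have hq' : f q = f (μ₀, W μ₀) := hq
      show f (a • p + b • q) = f (μ₀, W μ₀)
      rw [map_add, _root_.map_smul, _root_.map_smul, hp', hq', smul_eq_mul, smul_eq_mul,
        ← add_mul, hab, one_mul]
    obtain ⟨b, hb⟩ := hSne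
    have hlt := hf b hb
    have heq := hKconst (interior_subset hb)
    rw [Set.mem_setOf_eq] at heq
    rw [heq] at hlt
    exact lt_irrefl _ hlt
  have hβneg : β < 0 := lt_of_le_of_ne hβle hβne
  -- build the affine function
  set e : Θ → Θ → ℝ := fun θ => fun j => if θ = j then 1 else 0 with hedef
  have hglin : ∀ y : Θ → ℝ, g y = ∑ θ, y θ * g (e θ) := by
    intro y
    have hy : ((y, (0:ℝ)) : (Θ → ℝ) × ℝ) = ∑ θ, y θ • ((e θ, (0:ℝ)) : (Θ → ℝ) × ℝ) := by
      apply Prod.ext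
      · rw [Prod.fst_sum]
        simp only [Prod.smul_fst]
        exact pi_eq_sum_univ y
      · rw [Prod.snd_sum]
        simp
    simp only [hgdef]
    rw [hy, map_sum]
    refine Finset.sum_congr rfl fun θ _ => ?_
    rw [_root_.map_smul, smul_eq_mul]
  refine ⟨fun θ => g (e θ) / β, -(g μ₀) / β - W μ₀, ?_, ?_⟩
  · -- equality at μ₀
    have hsum : (∑ θ, g (e θ) / β * μ₀ θ) = g μ₀ / β := by
      rw [hglin μ₀, Finset.sum_div]
      exact Finset.sum_congr rfl fun θ _ => by ring
    rw [hsum]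
    simp only [hWdef]
    field_simp
    ring
  · -- inequality on Δ
    intro μ hμ
    have hsum : (∑ θ, g (e θ) / β * μ θ) = g μ / β := by
      rw [hglin μ, Finset.sum_div]
      exact Finset.sum_congr rfl fun θ _ => by ring
    rw [hsum]
    have hkey2 := hEf μ hμ 0 (W μ) le_rfl
    simp only [zero_mul, add_zero] at hkey2
    have h1 : W μ₀ - W μ ≤ (g μ - g μ₀) / β := by
      rw [le_div_iff_of_neg hβneg]
      nlinarith
    simp only [hWdef] at h1 ⊢
    have h2 : g μ / β + (-(g μ₀) / β - (Vhat μ₀ - V μ₀)) = (g μ - g μ₀)/β - (Vhat μ₀ - V μ₀) := by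
      ring
    rw [h2]
    linarith
end

section
/- Let W : Δ → ℝ be continuous on the simplex Δ over a finite state space, and let W̆ be its lower convex envelope. For any μ₀ in the interior of Δ, if W̆(μ₀) < W(μ₀) then there exists a probability measure F on Δ with barycenter μ₀ such that ∫W dF < W(μ₀). -/
open MeasureTheory

private lemma integrable_dirac'' {Θ : Type*} [Fintype Θ] {E : Type*} [NormedAddCommGroup E]
    (f : (Θ → ℝ) → E) (a : Θ → ℝ) : Integrable f (Measure.dirac a) := by
  constructor
  · exact (stronglyMeasurable_const (b := f a)).aestronglyMeasurable.congr
      (by simp [Filter.EventuallyEq, ae_dirac_eq])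
  · simp [HasFiniteIntegral, lintegral_dirac]

/-- if the lower convex envelope `W̆` of a continuous `W` on the simplex
satisfies `W̆(μ₀) < W(μ₀)` at an interior prior `μ₀`, then there is a probability
measure `F` on the simplex with barycenter `μ₀` and `∫W dF < W(μ₀)`. -/
theorem stmt12 {Θ : Type*} [Fintype Θ] (W : (Θ → ℝ) → ℝ)
    (hW : ContinuousOn W (stdSimplex ℝ Θ))
    (μ₀ : Θ → ℝ) (hμ₀ : μ₀ ∈ intrinsicInterior ℝ (stdSimplex ℝ Θ))
    (henv : sSup {y : ℝ | ∃ g : (Θ → ℝ) → ℝ, ConvexOn ℝ (stdSimplex ℝ Θ) g ∧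
        (∀ x ∈ stdSimplex ℝ Θ, g x ≤ W x) ∧ g μ₀ = y} < W μ₀) :
    ∃ F : Measure (Θ → ℝ), IsProbabilityMeasure F ∧
      F (stdSimplex ℝ Θ) = 1 ∧ (∫ x, x ∂F = μ₀) ∧
      (∫ x, W x ∂F) < W μ₀ := by
  set Δ := stdSimplex ℝ Θ with hΔdef
  have hμ₀Δ : μ₀ ∈ Δ := intrinsicInterior_subset hμ₀
  obtain ⟨xm, hxm, hm⟩ := (isCompact_stdSimplex ℝ Θ).exists_isMinOn ⟨μ₀, hμ₀Δ⟩ hW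
  set m := W xm with hmdef
  set G : Set ((Θ → ℝ) × ℝ) := {p | p.1 ∈ Δ ∧ p.2 = W p.1} with hGdef
  set K := convexHull ℝ G with hKdef
  have hKsub : K ⊆ {p : (Θ → ℝ) × ℝ | p.1 ∈ Δ ∧ m ≤ p.2} := by
    apply convexHull_min
    · rintro ⟨x, t⟩ ⟨hx, ht⟩; exact ⟨hx, ht ▸ hm hx⟩
    · exact (convex_stdSimplex ℝ Θ).prod (convex_Ici m)
  set S : (Θ → ℝ) → Set ℝ := fun x => {t | (x, t) ∈ K} with hSdef
  have hSmem : ∀ x ∈ Δ, W x ∈ S x := fun x hx => subset_convexHull ℝ G ⟨hx, rfl⟩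
  have hSne : ∀ x ∈ Δ, (S x).Nonempty := fun x hx => ⟨W x, hSmem x hx⟩
  have hSbdd : ∀ x, BddBelow (S x) := fun x => ⟨m, fun t ht => (hKsub ht).2⟩
  set Q : (Θ → ℝ) → ℝ := fun x => sInf (S x) with hQdef
  have hQle : ∀ x ∈ Δ, Q x ≤ W x := fun x hx => csInf_le (hSbdd x) (hSmem x hx)
  have hkey : ∀ x ∈ Δ, ∀ y ∈ Δ, ∀ a b : ℝ, 0 ≤ a → 0 ≤ b → a + b = 1 →
      ∀ t ∈ S x, ∀ s ∈ S y, Q (a • x + b • y) ≤ a * t + b * s := by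
    intro x hx y hy a b ha hb hab t ht s hs
    refine csInf_le (hSbdd _) ?_
    have := (convex_convexHull ℝ G) ht hs ha hb hab
    simp [Prod.smul_mk, Prod.mk_add_mk] at this; exact this
  have hQconv : ConvexOn ℝ Δ Q := by
    refine ⟨convex_stdSimplex ℝ Θ, fun x hx y hy a b ha hb hab => ?_⟩
    rcases eq_or_lt_of_le ha with ha0 | ha0
    · have hb1 : b = 1 := by linarith
      simp [← ha0, hb1]
    rcases eq_or_lt_of_le hb with hb0 | hb0
    · have ha1 : a = 1 := by linarith
      simp [← hb0, ha1]
    have h1 : ∀ s ∈ S y, Q (a • x + b • y) ≤ a * Q x + b * s := by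
      intro s hs
      have hle : (Q (a • x + b • y) - b * s) / a ≤ Q x := by
        refine le_csInf (hSne x hx) (fun t ht => ?_)
        rw [div_le_iff₀ ha0]
        have := hkey x hx y hy a b ha hb hab t ht s hs
        nlinarith
      rw [div_le_iff₀ ha0] at hle
      nlinarith
    have hle : (Q (a • x + b • y) - a * Q x) / b ≤ Q y := by
      refine le_csInf (hSne y hy) (fun s hs => ?_)
      rw [div_le_iff₀ hb0]
      have := h1 s hs
      nlinarith
    rw [div_le_iff₀ hb0] at hle
    have : a • Q x + b • Q y = a * Q x + b * Q y := rfl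
    rw [this]; nlinarith
  -- Q μ₀ < W μ₀
  have hQlt : Q μ₀ < W μ₀ := by
    have hmem : Q μ₀ ∈ {y : ℝ | ∃ g : (Θ → ℝ) → ℝ, ConvexOn ℝ (stdSimplex ℝ Θ) g ∧
        (∀ x ∈ stdSimplex ℝ Θ, g x ≤ W x) ∧ g μ₀ = y} := ⟨Q, hQconv, hQle, rfl⟩
    have hbd : BddAbove {y : ℝ | ∃ g : (Θ → ℝ) → ℝ, ConvexOn ℝ (stdSimplex ℝ Θ) g ∧
        (∀ x ∈ stdSimplex ℝ Θ, g x ≤ W x) ∧ g μ₀ = y} :=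
      ⟨W μ₀, by rintro y ⟨g, hg, hgle, rfl⟩; exact hgle μ₀ hμ₀Δ⟩
    exact lt_of_le_of_lt (le_csSup hbd hmem) henv
  obtain ⟨t, htK, htlt⟩ := exists_lt_of_csInf_lt (hSne μ₀ hμ₀Δ) hQlt
  have htK' : (μ₀, t) ∈ convexHull ℝ G := htK
  rw [convexHull_eq] at htK'
  obtain ⟨ι, s, w, z, hw0, hw1, hzG, hcm⟩ := htK'
  rw [Finset.centerMass_eq_of_sum_1 _ _ hw1] at hcm
  have hfst : ∑ i ∈ s, w i • (z i).1 = μ₀ := by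
    have := congrArg Prod.fst hcm
    simpa [Prod.fst_sum] using this
  have hsnd : ∑ i ∈ s, w i * (z i).2 = t := by
    have := congrArg Prod.snd hcm
    simpa [Prod.snd_sum, smul_eq_mul] using this
  have hzΔ : ∀ i ∈ s, (z i).1 ∈ Δ := fun i hi => (hzG i hi).1
  have hzW : ∀ i ∈ s, (z i).2 = W (z i).1 := fun i hi => (hzG i hi).2
  refine ⟨∑ i ∈ s, (ENNReal.ofReal (w i)) • Measure.dirac ((z i).1), ?_, ?_, ?_, ?_⟩
  case _ =>
    constructor
    rw [Measure.finset_sum_apply]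
    simp only [Measure.smul_apply, measure_univ, smul_eq_mul, mul_one]
    rw [← ENNReal.ofReal_sum_of_nonneg hw0, hw1, ENNReal.ofReal_one]
  case _ =>
    rw [Measure.finset_sum_apply]
    have : ∀ i ∈ s, (Measure.dirac ((z i).1)) Δ = 1 := fun i hi => by
      rw [Measure.dirac_apply]
      simp [Set.indicator_of_mem (hzΔ i hi)]
    calc (∑ i ∈ s, ((ENNReal.ofReal (w i)) • Measure.dirac ((z i).1)) Δ)
        = ∑ i ∈ s, ENNReal.ofReal (w i) := by
          refine Finset.sum_congr rfl (fun i hi => ?_)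
          rw [Measure.smul_apply, this i hi, smul_eq_mul, mul_one]
      _ = 1 := by rw [← ENNReal.ofReal_sum_of_nonneg hw0, hw1, ENNReal.ofReal_one]
  all_goals {
    first
    | (rw [integral_finset_sum_measure (fun i _ =>
          (integrable_dirac'' _ _).smul_measure ENNReal.ofReal_ne_top)]
       simp only [integral_smul_measure, integral_dirac]
       rw [← hfst]
       refine Finset.sum_congr rfl (fun i hi => ?_)
       rw [ENNReal.toReal_ofReal (hw0 i hi)])
    | (rw [integral_finset_sum_measure (fun i _ =>
          (integrable_dirac'' _ _).smul_measure ENNReal.ofReal_ne_top)]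
       simp only [integral_smul_measure, integral_dirac]
       calc (∑ i ∈ s, (ENNReal.ofReal (w i)).toReal • W ((z i).1))
           = ∑ i ∈ s, w i * (z i).2 := by
             refine Finset.sum_congr rfl (fun i hi => ?_)
             rw [ENNReal.toReal_ofReal (hw0 i hi), hzW i hi, smul_eq_mul]
         _ = t := hsnd
         _ < W μ₀ := htlt) }
end

section
/- Let Δ = [0,1] (two states), with V(μ) = max{a₁(μ), a₂(μ)} where a₁(μ) = (1-μ)α₁ + μβ₁ and a₂(μ) = (1-μ)α₂ + μβ₂, α₁ > α₂, β₂ > β₁. The unique indifference belief is μ₁ = (α₁-α₂)/((α₁-α₂)+(β₂-β₁)). Let φ : ℝ → ℝ be strictly increasing and strictly concave, and let μ̂₁ be the indifference belief for utilities φ∘u, i.e., μ̂₁ = (φ(α₁)-φ(α₂))/((φ(α₁)-φ(α₂))+(φ(β₂)-φ(β₁))). If μ̂₁ = μ₁, then for every sufficiently small ε > 0, replacing α₁ by α₁ - ε makes the φ-indifference belief strictly exceed the untransformed indifference belief: (φ(α₁-ε)-φ(α₂))/((φ(α₁-ε)-φ(α₂))+(φ(β₂)-φ(β₁))) > (α₁-ε-α₂)/((α₁-ε-α₂)+(β₂-β₁)).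 -/
/-- two-state decision problem under a strictly increasing, strictly
concave transformation `φ`. If the transformed indifference belief equals the original
one, then subtracting any sufficiently small `ε > 0` from `α₁` makes the transformed
indifference belief strictly exceed the untransformed one. -/
theorem stmt13 (α₁ α₂ β₁ β₂ : ℝ) (hα : α₂ < α₁) (hβ : β₁ < β₂)
    (φ : ℝ → ℝ) (hmono : StrictMono φ) (hconc : StrictConcaveOn ℝ Set.univ φ)
    (heq : (φ α₁ - φ α₂) / ((φ α₁ - φ α₂) + (φ β₂ - φ β₁))
      = (α₁ - α₂) / ((α₁ - α₂) + (β₂ - β₁))) :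
    ∃ ε₀ > (0 : ℝ), ∀ ε : ℝ, 0 < ε → ε < ε₀ →
      (φ (α₁ - ε) - φ α₂) / ((φ (α₁ - ε) - φ α₂) + (φ β₂ - φ β₁))
        > (α₁ - ε - α₂) / ((α₁ - ε - α₂) + (β₂ - β₁)) := by
  set A := α₁ - α₂ with hA
  have hA0 : 0 < A := by simp [hA]; linarith
  have hg0 : 0 < φ β₂ - φ β₁ := sub_pos.mpr (hmono hβ)
  have hf0 : 0 < φ α₁ - φ α₂ := sub_pos.mpr (hmono hα)
  -- from heq: (φ α₁ - φ α₂) * (β₂ - β₁) = A * (φ β₂ - φ β₁)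
  have hkey : (φ α₁ - φ α₂) * (β₂ - β₁) = A * (φ β₂ - φ β₁) := by
    have h1 : (0:ℝ) < (φ α₁ - φ α₂) + (φ β₂ - φ β₁) := by linarith
    have h2 : (0:ℝ) < A + (β₂ - β₁) := by linarith
    have := (div_eq_div_iff h1.ne' h2.ne').mp heq
    nlinarith [this]
  refine ⟨A, hA0, fun ε hε hεA => ?_⟩
  have ht0 : 0 < ε / A := div_pos hε hA0
  have ht1 : ε / A < 1 := (div_lt_one hA0).mpr hεA
  -- strict concavity: φ(α₁ - ε) > (ε/A) φ α₂ + (1 - ε/A) φ α₁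
  have hcomb : (ε/A) • α₂ + (1 - ε/A) • α₁ = α₁ - ε := by
    simp only [smul_eq_mul]
    rw [show ε/A * α₂ + (1 - ε/A) * α₁ = α₁ - ε/A * (α₁ - α₂) by ring, ← hA, div_mul_cancel₀ ε hA0.ne']
  have hcv := hconc.2 (Set.mem_univ α₂) (Set.mem_univ α₁) (ne_of_lt hα) ht0
    (by linarith : 0 < 1 - ε/A) (by ring)
  rw [hcomb] at hcv
  simp only [smul_eq_mul] at hcv
  have hfε : φ (α₁ - ε) - φ α₂ > (1 - ε/A) * (φ α₁ - φ α₂) := by nlinarith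
  have hfεpos : 0 < φ (α₁ - ε) - φ α₂ := by nlinarith
  have hAε : 0 < α₁ - ε - α₂ := by simp [hA] at hεA ⊢; linarith
  -- the crucial product inequality
  have hprod : (φ (α₁ - ε) - φ α₂) * (β₂ - β₁) > (α₁ - ε - α₂) * (φ β₂ - φ β₁) := by
    have h1 : (1 - ε/A) * (φ α₁ - φ α₂) * (β₂ - β₁) = (1 - ε/A) * A * (φ β₂ - φ β₁) := by
      rw [mul_assoc, hkey]; ring
    have h2 : (1 - ε/A) * A = α₁ - ε - α₂ := by field_simp; rw [hA]; ring
    nlinarith [sub_pos.mpr hβ]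
  rw [gt_iff_lt, div_lt_div_iff₀ (by linarith) (by linarith)]
  nlinarith
end
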